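/- For each fixed t ∈ [0,1], the Hashin–Shtrikman upper-bound function v ↦ f^HS(t;v) is continuous on the interval [0,1] (equivalently, v ↦ q(t;v) is continuous on [0,1], since the Voigt part is affine in v). -/

import Mathlib

set_option maxHeartbeats 1000000


open Real

/-- The square root `s = √(1 - t²)`. -/
noncomputable def sHS (t : ℝ) : ℝ := Real.sqrt (1 - t ^ 2)

/-- The Hashin–Shtrikman correction term `q(t; v)` for two well-ordered isotropic
plane-stress phases with bulk moduli `κm < κp` and shear moduli `μm < μp`. -/
noncomputable def qHS (κm κp μm μp t v : ℝ) : ℝ :=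
  if v * (κp - κm) * t ≤ (κp + μp - (κp - κm) * v) * sHS t ∧
     v * (μp - μm) * sHS t ≤ (κp + μp - (μp - μm) * v) * t then
    v * (1 - v) * ((κp - κm) * t - (μp - μm) * sHS t) ^ 2 /
      (κp + μp - ((κp - κm) + (μp - μm)) * v)
  else if (κp + μp - (κp - κm) * v) * sHS t < v * (κp - κm) * t then
    (1 - v) * (v * (κp - κm) ^ 2 * t ^ 2 / (κp + μp - (κp - κm) * v)
      - (μp - μm) * (sHS t) ^ 2)
  else
    (1 - v) * (v * (μp - μm) ^ 2 * (sHS t) ^ 2 / (κp + μp - (μp - μm) * v)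
      - (κp - κm) * t ^ 2)

/-- The Hashin–Shtrikman upper-bound function `f^HS(t; v)`:
the Voigt energy minus the correction `q(t; v)`. -/
noncomputable def fHS (κm κp μm μp t v : ℝ) : ℝ :=
  (κm + v * (κp - κm)) * t ^ 2 + (μm + v * (μp - μm)) * (1 - t ^ 2)
    - qHS κm κp μm μp t v

/-- For each fixed `t ∈ [0,1]`, the Hashin–Shtrikman upper-bound function
`v ↦ f^HS(t;v)` is continuous on `[0,1]`. -/
theorem hs_upper_bound_continuousOn
    (κm κp μm μp : ℝ) (hκm : 0 < κm) (hκ : κm < κp) (hμm : 0 < μm) (hμ : μm < μp)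
    (t : ℝ) (ht : t ∈ Set.Icc (0 : ℝ) 1) :
    ContinuousOn (fun v => fHS κm κp μm μp t v) (Set.Icc (0 : ℝ) 1) := by
  obtain ⟨ht0, ht1⟩ := ht
  set s : ℝ := sHS t with hs_def
  have hs0 : 0 ≤ s := Real.sqrt_nonneg _
  set c : ℝ := κp - κm with hc_def
  set d : ℝ := μp - μm with hd_def
  set D : ℝ := κp + μp with hD_def
  have hc : 0 < c := by simp [hc_def]; linarith
  have hd : 0 < d := by simp [hd_def]; linarith
  -- continuous model function
  set F : ℝ → ℝ := fun v =>
    (κm + v * c) * t ^ 2 + (μm + v * d) * (1 - t ^ 2)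
    - ( v * (1 - v) * (c * t - d * s) ^ 2 / (D - (c + d) * v)
        - d * (1 - v) * (max 0 (v * c * t - (D - c * v) * s)) ^ 2
            / ((D - (c + d) * v) * (D - c * v))
        - c * (1 - v) * (max 0 (v * d * s - (D - d * v) * t)) ^ 2
            / ((D - (c + d) * v) * (D - d * v)) ) with hF_def
  have hden1 : ∀ v ∈ Set.Icc (0:ℝ) 1, (0:ℝ) < D - (c + d) * v := by
    intro v ⟨h0, h1⟩
    have : D - (c + d) * v ≥ D - (c + d) := by nlinarith
    simp only [hc_def, hd_def, hD_def] at this ⊢; nlinarith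
  have hden2 : ∀ v ∈ Set.Icc (0:ℝ) 1, (0:ℝ) < D - c * v := by
    intro v ⟨h0, h1⟩
    have : D - c * v ≥ D - c := by nlinarith
    simp only [hc_def, hD_def] at this ⊢; nlinarith
  have hden3 : ∀ v ∈ Set.Icc (0:ℝ) 1, (0:ℝ) < D - d * v := by
    intro v ⟨h0, h1⟩
    have : D - d * v ≥ D - d := by nlinarith
    simp only [hd_def, hD_def] at this ⊢; nlinarith
  have hFcont : ContinuousOn F (Set.Icc (0:ℝ) 1) := by
    apply ContinuousOn.sub (by fun_prop)
    apply ContinuousOn.sub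
    apply ContinuousOn.sub
    · exact ContinuousOn.div (by fun_prop) (by fun_prop)
        (fun v hv => ne_of_gt (hden1 v hv))
    · exact ContinuousOn.div (by fun_prop)
        (ContinuousOn.mul (by fun_prop) (by fun_prop))
        (fun v hv => ne_of_gt (mul_pos (hden1 v hv) (hden2 v hv)))
    · exact ContinuousOn.div (by fun_prop)
        (ContinuousOn.mul (by fun_prop) (by fun_prop))
        (fun v hv => ne_of_gt (mul_pos (hden1 v hv) (hden3 v hv)))
  apply hFcont.congr
  intro v hv
  obtain ⟨hv0, hv1⟩ := hv
  have h1 : (0:ℝ) < D - (c + d) * v := hden1 v ⟨hv0, hv1⟩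
  have h2 : (0:ℝ) < D - c * v := hden2 v ⟨hv0, hv1⟩
  have h3 : (0:ℝ) < D - d * v := hden3 v ⟨hv0, hv1⟩
  have h1' : D - (c + d) * v ≠ 0 := ne_of_gt h1
  have h2' : D - c * v ≠ 0 := ne_of_gt h2
  have h3' : D - d * v ≠ 0 := ne_of_gt h3
  -- exclusivity of the two strict regimes
  have excl : ¬ ((D - c * v) * s < v * c * t ∧ (D - d * v) * t < v * d * s) := by
    rintro ⟨ha, hb⟩
    have hta : 0 < v * c * t := lt_of_le_of_lt (mul_nonneg h2.le hs0) ha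
    have hsb : 0 < v * d * s := lt_of_le_of_lt (mul_nonneg h3.le ht0) hb
    have htpos : 0 < t := by nlinarith
    have hspos : 0 < s := by nlinarith
    have hmul : ((D - c * v) * s) * ((D - d * v) * t) < (v * c * t) * (v * d * s) := by
      exact mul_lt_mul'' ha hb (mul_nonneg h2.le hs0) (mul_nonneg h3.le ht0)
    have cgap : c < D - d * v := by
      simp only [hc_def, hd_def, hD_def]; nlinarith
    have dgap : d < D - c * v := by
      simp only [hc_def, hd_def, hD_def]; nlinarith
    have hcd : c * d < (D - c * v) * (D - d * v) := by
      nlinarith [mul_lt_mul'' dgap cgap hd.le hc.le]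
    have hv2 : (1 - v) * (1 + v) ≥ 0 :=
      mul_nonneg (by linarith) (by linarith)
    have e1 : v ^ 2 * (c * d) * (t * s) ≤ c * d * (t * s) := by
      nlinarith [mul_pos (mul_pos hc hd) (mul_pos htpos hspos), hv2]
    have e2 : c * d * (t * s) < (D - c * v) * (D - d * v) * (t * s) := by
      nlinarith [mul_pos htpos hspos, hcd]
    nlinarith [hmul, e1, e2]
  show fHS κm κp μm μp t v = F v
  rw [fHS, qHS]
  rw [← hs_def, ← hc_def, ← hd_def]
  have hDq : κp + μp = D := hD_def.symm
  split_ifs with hA hB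
  · obtain ⟨ha, hb⟩ := hA
    have m1 : max 0 (v * c * t - (D - c * v) * s) = 0 :=
      max_eq_left (by rw [hD_def]; linarith [ha])
    have m2 : max 0 (v * d * s - (D - d * v) * t) = 0 :=
      max_eq_left (by rw [hD_def]; linarith [hb])
    simp only [hF_def, m1, m2]
    rw [hD_def]
    ring_nf
  · -- strict regime 2
    have hb : v * d * s ≤ (D - d * v) * t := by
      by_contra hcon
      push_neg at hcon
      have : (D - c * v) * s < v * c * t := by rw [hD_def]; exact hB
      exact excl ⟨this, hcon⟩
    have m1 : max 0 (v * c * t - (D - c * v) * s) = v * c * t - (D - c * v) * s :=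
      max_eq_right (by rw [hD_def]; linarith [hB])
    have m2 : max 0 (v * d * s - (D - d * v) * t) = 0 := max_eq_left (by linarith)
    simp only [hF_def, m1, m2]
    rw [hD_def]
    have k1 : κp + μp - v * (c + d) ≠ 0 := ne_of_gt (by rw [← hD_def]; linarith)
    have k2 : κp + μp - v * c ≠ 0 := ne_of_gt (by rw [← hD_def]; linarith)
    have k3 : κp + μp - v * d ≠ 0 := ne_of_gt (by rw [← hD_def]; linarith)
    field_simp
    ring
  · -- regime 3
    push_neg at hA
    have ha : v * c * t ≤ (κp + μp - c * v) * s := by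
      push_neg at hB; linarith [hB]
    have hb : (κp + μp - d * v) * t < v * d * s := hA ha
    have m1 : max 0 (v * c * t - (D - c * v) * s) = 0 :=
      max_eq_left (by rw [hD_def]; linarith)
    have m2 : max 0 (v * d * s - (D - d * v) * t) = v * d * s - (D - d * v) * t :=
      max_eq_right (by rw [hD_def]; linarith)
    simp only [hF_def, m1, m2]
    rw [hD_def]
    have k1 : κp + μp - v * (c + d) ≠ 0 := ne_of_gt (by rw [← hD_def]; linarith)
    have k2 : κp + μp - v * c ≠ 0 := ne_of_gt (by rw [← hD_def]; linarith)
    have k3 : κp + μp - v * d ≠ 0 := ne_of_gt (by rw [← hD_def]; linarith)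
    field_simp
    ring
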